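/- Let L be self-adjoint on a complex Hilbert space 𝔥 with (Lu|u) ≥ −m_*‖u‖² on D(L) (m_* ≥ 0), and B bounded skew-symmetric with ‖B‖ ≤ β. Then the spectrum of the quadratic pencil 𝔏(λ) = λ² + λB + L is contained in the set S = iℝ ∪ { λ ∈ ℂ : |λ| ≤ √m_* and |Im λ| ≤ β/2 }. -/

import Mathlib

open scoped ComplexInnerProductSpace

variable {H : Type*} [NormedAddCommGroup H] [InnerProductSpace ℂ H] [CompleteSpace H]

/-- `Rop` is a bounded two-sided inverse of the pencil `𝔏(λ) = λ² + λ B + L` with domain `D`. -/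
def IsPencilInverse (D : Set H) (L : H →ₗ[ℂ] H) (B : H →L[ℂ] H) (lam : ℂ)
    (Rop : H →L[ℂ] H) : Prop :=
  (∀ f : H, Rop f ∈ D ∧ lam ^ 2 • Rop f + lam • B (Rop f) + L (Rop f) = f) ∧
  (∀ u ∈ D, Rop (lam ^ 2 • u + lam • B u + L u) = u)

/-- `λ` belongs to the resolvent set of the pencil. -/
def PencilResolvent (D : Set H) (L : H →ₗ[ℂ] H) (B : H →L[ℂ] H) (lam : ℂ) : Prop :=
  ∃ Rop : H →L[ℂ] H, IsPencilInverse D L B lam Rop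

private lemma numeric_bound (mstar β : ℝ) (lam : ℂ) (hre : lam.re ≠ 0)
    (h : mstar < ‖lam‖ ^ 2 ∨ β / 2 < |lam.im|) :
    ∃ δ > 0, ∀ b c : ℝ, |b| ≤ β → -mstar ≤ c →
      δ ≤ ‖lam ^ 2 + (b : ℂ) * Complex.I * lam + (c : ℂ)‖ := by
  set x := lam.re with hx
  set y := lam.im with hy
  have him : ∀ b c : ℝ, (lam ^ 2 + (b : ℂ) * Complex.I * lam + (c : ℂ)).im
      = x * (2 * y + b) := by
    intro b c
    simp [pow_two, Complex.add_im, Complex.mul_im, Complex.mul_re]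
    ring
  have hreq : ∀ b c : ℝ, (lam ^ 2 + (b : ℂ) * Complex.I * lam + (c : ℂ)).re
      = x ^ 2 + y ^ 2 - y * (2 * y + b) + c := by
    intro b c
    simp [pow_two, Complex.add_re, Complex.mul_re, Complex.mul_im]
    ring
  have habs_im : ∀ z : ℂ, |z.im| ≤ ‖z‖ := fun z => Complex.abs_im_le_norm z
  have habs_re : ∀ z : ℂ, |z.re| ≤ ‖z‖ := fun z => Complex.abs_re_le_norm z
  rcases h with h | h
  · -- case mstar < ‖lam‖^2
    have hnormsq : ‖lam‖ ^ 2 = x ^ 2 + y ^ 2 := by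
      rw [Complex.sq_norm, Complex.normSq_apply]; ring
    set s := x ^ 2 + y ^ 2 - mstar with hs
    have hspos : 0 < s := by rw [hs]; nlinarith
    set ε := s / (2 * (|y| + 1)) with hε
    have hεpos : 0 < ε := by positivity
    refine ⟨min (|x| * ε) (s / 2), lt_min (by positivity) (by positivity), ?_⟩
    intro b c hb hc
    rcases le_or_gt ε (|2 * y + b|) with hbc | hbc
    · calc min (|x| * ε) (s / 2) ≤ |x| * ε := min_le_left _ _
        _ ≤ |x| * |2 * y + b| := by
            exact mul_le_mul_of_nonneg_left hbc (abs_nonneg x)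
        _ = |(lam ^ 2 + (b : ℂ) * Complex.I * lam + (c : ℂ)).im| := by
            rw [him b c, abs_mul]
        _ ≤ _ := habs_im _
    · have hkey : y * (2 * y + b) ≤ s / 2 := by
        have h1 : y * (2 * y + b) ≤ |y| * ε := by
          calc y * (2 * y + b) ≤ |y * (2 * y + b)| := le_abs_self _
            _ = |y| * |2 * y + b| := abs_mul _ _
            _ ≤ |y| * ε := mul_le_mul_of_nonneg_left hbc.le (abs_nonneg y)
        have h2 : |y| * ε ≤ s / 2 := by
          have h3 : 0 ≤ |y| := abs_nonneg y
          have h4 : ε * (2 * (|y| + 1)) = s := by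
            rw [hε]; field_simp
          nlinarith [hεpos]
        linarith
      calc min (|x| * ε) (s / 2) ≤ s / 2 := min_le_right _ _
        _ ≤ (lam ^ 2 + (b : ℂ) * Complex.I * lam + (c : ℂ)).re := by
            rw [hreq b c]; rw [hs] at hkey ⊢; linarith
        _ ≤ |(lam ^ 2 + (b : ℂ) * Complex.I * lam + (c : ℂ)).re| := le_abs_self _
        _ ≤ _ := habs_re _
  · -- case β/2 < |y|
    refine ⟨|x| * (2 * |y| - β), by
      have : 0 < 2 * |y| - β := by linarith
      positivity, ?_⟩
    intro b c hb hc
    have h1 : 2 * |y| - β ≤ |2 * y + b| := by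
      have h0 := abs_sub_abs_le_abs_sub (2 * y) (-b)
      rw [abs_neg, sub_neg_eq_add] at h0
      have h2 : |2 * y| = 2 * |y| := by rw [abs_mul, abs_two]
      rw [h2] at h0
      linarith
    calc |x| * (2 * |y| - β) ≤ |x| * |2 * y + b| :=
        mul_le_mul_of_nonneg_left h1 (abs_nonneg x)
      _ = |(lam ^ 2 + (b : ℂ) * Complex.I * lam + (c : ℂ)).im| := by
          rw [him b c, abs_mul]
      _ ≤ _ := habs_im _

private lemma op_lower (D : Set H) (L : H →ₗ[ℂ] H) (B : H →L[ℂ] H) (mstar β : ℝ)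
    (hsym : ∀ u ∈ D, ∀ v ∈ D, ⟪L u, v⟫ = ⟪u, L v⟫)
    (hlb : ∀ u ∈ D, -mstar * ‖u‖ ^ 2 ≤ (⟪L u, u⟫).re)
    (hskew : ∀ v w : H, ⟪B v, w⟫ = -⟪v, B w⟫)
    (hB : ‖B‖ ≤ β) (lam : ℂ) (δ : ℝ)
    (hδ : ∀ b c : ℝ, |b| ≤ β → -mstar ≤ c →
      δ ≤ ‖lam ^ 2 + (b : ℂ) * Complex.I * lam + (c : ℂ)‖) :
    ∀ u ∈ D, δ * ‖u‖ ≤ ‖lam ^ 2 • u + lam • B u + L u‖ := by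
  intro u hu
  by_cases hu0 : u = 0
  · simp [hu0]
  have hn : 0 < ‖u‖ := norm_pos_iff.mpr hu0
  have hn2 : 0 < ‖u‖ ^ 2 := by positivity
  set n : ℝ := ‖u‖ ^ 2 with hn_def
  set b : ℝ := (⟪u, B u⟫ : ℂ).im / n with hb_def
  set c : ℝ := (⟪u, L u⟫ : ℂ).re / n with hc_def
  -- real part of ⟪u, B u⟫ vanishes
  have hBre : (⟪u, B u⟫ : ℂ).re = 0 := by
    have h1 : (starRingEnd ℂ) ⟪u, B u⟫ = ⟪B u, u⟫ := inner_conj_symm _ _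
    have h2 : ⟪B u, u⟫ = -⟪u, B u⟫ := hskew u u
    have h3 : ((starRingEnd ℂ) ⟪u, B u⟫).re = (⟪u, B u⟫ : ℂ).re := Complex.conj_re _
    rw [h2] at h1
    have := congrArg Complex.re h1
    rw [h3, Complex.neg_re] at this
    linarith
  -- ⟪u, L u⟫ is real and agrees with ⟪L u, u⟫
  have hLreal : (⟪u, L u⟫ : ℂ) = ((⟪L u, u⟫ : ℂ).re : ℂ) := by
    have h1 : (starRingEnd ℂ) ⟪L u, u⟫ = ⟪u, L u⟫ := inner_conj_symm _ _
    have h2 : ⟪L u, u⟫ = ⟪u, L u⟫ := hsym u hu u hu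
    rw [h2] at h1 ⊢
    exact (Complex.conj_eq_iff_re.mp h1).symm
  -- inner products as scalars
  have hinner_self : (⟪u, u⟫ : ℂ) = ((n : ℝ) : ℂ) := by
    rw [inner_self_eq_norm_sq_to_K, hn_def]; norm_cast
  have hinnerB : (⟪u, B u⟫ : ℂ) = ((b * n : ℝ) : ℂ) * Complex.I := by
    apply Complex.ext
    · simp [hBre]
    · simp [hb_def]
      field_simp
  have hinnerL : (⟪u, L u⟫ : ℂ) = ((c * n : ℝ) : ℂ) := by
    rw [hLreal]
    have : (⟪u, L u⟫ : ℂ).re = (⟪L u, u⟫ : ℂ).re := by rw [hLreal]; simp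
    norm_cast
    rw [hc_def, ← this]
    rw [hLreal]
    simp
    field_simp
  -- bounds on b and c
  have hb_bound : |b| ≤ β := by
    have h1 : ‖(⟪u, B u⟫ : ℂ)‖ ≤ ‖u‖ * ‖B u‖ := norm_inner_le_norm _ _
    have h2 : ‖B u‖ ≤ ‖B‖ * ‖u‖ := B.le_opNorm u
    have h3 : |(⟪u, B u⟫ : ℂ).im| ≤ ‖(⟪u, B u⟫ : ℂ)‖ := Complex.abs_im_le_norm _
    have h4 : ‖(⟪u, B u⟫ : ℂ)‖ ≤ β * n := by
      calc ‖(⟪u, B u⟫ : ℂ)‖ ≤ ‖u‖ * ‖B u‖ := h1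
        _ ≤ ‖u‖ * (‖B‖ * ‖u‖) := by nlinarith [norm_nonneg u]
        _ ≤ β * n := by rw [hn_def]; nlinarith [norm_nonneg u, norm_nonneg B]
    rw [hb_def, abs_div, abs_of_pos hn2]
    rw [div_le_iff₀ hn2]
    linarith
  have hc_bound : -mstar ≤ c := by
    have := hlb u hu
    rw [hc_def]
    have hre_eq : (⟪u, L u⟫ : ℂ).re = (⟪L u, u⟫ : ℂ).re := by rw [hLreal]; simp
    rw [hre_eq, le_div_iff₀ hn2]
    rw [← hn_def] at this
    linarith
  -- key identity
  have hinner_eq : (⟪u, lam ^ 2 • u + lam • B u + L u⟫ : ℂ)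
      = (lam ^ 2 + (b : ℂ) * Complex.I * lam + (c : ℂ)) * ((n : ℝ) : ℂ) := by
    rw [inner_add_right, inner_add_right, inner_smul_right, inner_smul_right,
      hinner_self, hinnerB, hinnerL]
    push_cast
    ring
  have hnorm_eq : ‖(⟪u, lam ^ 2 • u + lam • B u + L u⟫ : ℂ)‖
      = ‖lam ^ 2 + (b : ℂ) * Complex.I * lam + (c : ℂ)‖ * n := by
    rw [hinner_eq, norm_mul, Complex.norm_real, Real.norm_eq_abs, abs_of_pos hn2]
  have hcs : ‖(⟪u, lam ^ 2 • u + lam • B u + L u⟫ : ℂ)‖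
      ≤ ‖u‖ * ‖lam ^ 2 • u + lam • B u + L u‖ := norm_inner_le_norm _ _
  have hδ' := hδ b c hb_bound hc_bound
  have hfin : δ * n ≤ ‖u‖ * ‖lam ^ 2 • u + lam • B u + L u‖ := by
    calc δ * n ≤ ‖lam ^ 2 + (b : ℂ) * Complex.I * lam + (c : ℂ)‖ * n := by
          nlinarith
      _ = ‖(⟪u, lam ^ 2 • u + lam • B u + L u⟫ : ℂ)‖ := hnorm_eq.symm
      _ ≤ _ := hcs
  have : δ * ‖u‖ * ‖u‖ ≤ ‖lam ^ 2 • u + lam • B u + L u‖ * ‖u‖ := by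
    calc δ * ‖u‖ * ‖u‖ = δ * n := by rw [hn_def]; ring
      _ ≤ ‖u‖ * ‖lam ^ 2 • u + lam • B u + L u‖ := hfin
      _ = ‖lam ^ 2 • u + lam • B u + L u‖ * ‖u‖ := by ring
  exact le_of_mul_le_mul_right this hn

/-- for `L` self-adjoint with `(Lu|u) ≥ −m_*‖u‖²` (`m_* ≥ 0`) and `B` bounded
skew-symmetric with `‖B‖ ≤ β`, the spectrum of the pencil `𝔏(λ) = λ² + λB + L` is contained
in `S = iℝ ∪ {λ : |λ| ≤ √m_* and |Im λ| ≤ β/2}`. -/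
theorem stmt8 (D : Set H) (L : H →ₗ[ℂ] H) (B : H →L[ℂ] H) (mstar β : ℝ)
    (hmstar : 0 ≤ mstar)
    (hsym : ∀ u ∈ D, ∀ v ∈ D, ⟪L u, v⟫ = ⟪u, L v⟫)
    (hSA : ∀ v w : H, (∀ u ∈ D, ⟪L u, v⟫ = ⟪u, w⟫) → v ∈ D ∧ L v = w)
    (hlb : ∀ u ∈ D, -mstar * ‖u‖ ^ 2 ≤ (⟪L u, u⟫).re)
    (hskew : ∀ v w : H, ⟪B v, w⟫ = -⟪v, B w⟫)
    (hB : ‖B‖ ≤ β)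
    (lam : ℂ) (hlam : ¬ PencilResolvent D L B lam) :
    lam.re = 0 ∨ (‖lam‖ ≤ Real.sqrt mstar ∧ |lam.im| ≤ β / 2) := by
  by_contra hcon
  push_neg at hcon
  obtain ⟨hre, himp⟩ := hcon
  have hdisj : mstar < ‖lam‖ ^ 2 ∨ β / 2 < |lam.im| := by
    rcases le_or_gt ‖lam‖ (Real.sqrt mstar) with h | h
    · exact Or.inr (himp h)
    · left
      have h1 := Real.sq_sqrt hmstar
      nlinarith [Real.sqrt_nonneg mstar]
  apply hlam
  -- the adjoint point
  set mu : ℂ := -((starRingEnd ℂ) lam) with hmu_def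
  have hmu_re : mu.re = -lam.re := by simp [hmu_def]
  have hmu_im : mu.im = lam.im := by simp [hmu_def]
  have hmu_norm : ‖mu‖ = ‖lam‖ := by
    rw [hmu_def, norm_neg, RCLike.norm_conj]
  obtain ⟨δ₁, hδ₁pos, hδ₁⟩ := numeric_bound mstar β lam hre hdisj
  obtain ⟨δ₂, hδ₂pos, hδ₂⟩ := numeric_bound mstar β mu
    (by rw [hmu_re]; simpa using hre)
    (by rw [hmu_norm, hmu_im]; exact hdisj)
  have hlow1 := op_lower D L B mstar β hsym hlb hskew hB lam δ₁ hδ₁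
  have hlow2 := op_lower D L B mstar β hsym hlb hskew hB mu δ₂ hδ₂
  -- D is closed under the module operations
  have hzeroD : (0 : H) ∈ D := (hSA 0 0 (by intro u hu; simp)).1
  have haddD : ∀ v ∈ D, ∀ w ∈ D, v + w ∈ D := by
    intro v hv w hw
    refine (hSA (v + w) (L v + L w) ?_).1
    intro u hu
    rw [inner_add_right, inner_add_right, hsym u hu v hv, hsym u hu w hw]
  have hsmulD : ∀ (a : ℂ), ∀ v ∈ D, a • v ∈ D := by
    intro a v hv
    refine (hSA (a • v) (a • L v) ?_).1
    intro u hu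
    rw [inner_smul_right, inner_smul_right, hsym u hu v hv]
  have hsubD : ∀ v ∈ D, ∀ w ∈ D, v - w ∈ D := by
    intro v hv w hw
    rw [sub_eq_add_neg, ← neg_one_smul ℂ w]
    exact haddD v hv _ (hsmulD _ w hw)
  -- the pencil as a function
  set T : ℂ → H → H := fun ν u => ν ^ 2 • u + ν • B u + L u with hT_def
  have hT_add : ∀ ν (u v : H), T ν (u + v) = T ν u + T ν v := by
    intro ν u v
    simp only [hT_def, smul_add, map_add]
    abel
  have hT_smul : ∀ ν (a : ℂ) (u : H), T ν (a • u) = a • T ν u := by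
    intro ν a u
    simp only [hT_def, map_smul, smul_add, smul_comm a]
  have hT_sub : ∀ ν (u v : H), T ν (u - v) = T ν u - T ν v := by
    intro ν u v
    simp only [hT_def, smul_sub, map_sub]
    abel
  have hT_zero : ∀ ν, T ν (0 : H) = 0 := by intro ν; simp [hT_def]
  -- injectivity with bound at lam
  have hinj : ∀ u ∈ D, ∀ v ∈ D, T lam u = T lam v → u = v := by
    intro u hu v hv he
    have h1 := hlow1 (u - v) (hsubD u hu v hv)
    have h2 : T lam (u - v) = 0 := by rw [hT_sub, he, sub_self]
    rw [show lam ^ 2 • (u - v) + lam • B (u - v) + L (u - v) = T lam (u - v) from rfl,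
      h2, norm_zero] at h1
    have h3 : ‖u - v‖ ≤ 0 := by
      by_contra h4
      push_neg at h4
      nlinarith
    rw [← sub_eq_zero]
    exact norm_le_zero_iff.mp h3
  -- range submodule
  set Ra : Submodule ℂ H :=
    { carrier := {f | ∃ u, u ∈ D ∧ T lam u = f}
      add_mem' := by
        rintro f g ⟨u, hu, rfl⟩ ⟨v, hv, rfl⟩
        exact ⟨u + v, haddD u hu v hv, hT_add lam u v⟩
      zero_mem' := ⟨0, hzeroD, hT_zero lam⟩
      smul_mem' := by
        rintro a f ⟨u, hu, rfl⟩
        exact ⟨a • u, hsmulD a u hu, hT_smul lam a u⟩ } with hRa_def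
  -- Raᗮ = ⊥
  have horth : Raᗮ = ⊥ := by
    rw [Submodule.eq_bot_iff]
    intro f hf
    rw [Submodule.mem_orthogonal] at hf
    have hLf : ∀ u ∈ D, ⟪L u, f⟫
        = ⟪u, (-((starRingEnd ℂ) lam) ^ 2) • f + ((starRingEnd ℂ) lam) • B f⟫ := by
      intro u hu
      have h0 : (⟪T lam u, f⟫ : ℂ) = 0 := hf (T lam u) ⟨u, hu, rfl⟩
      have h1 : (⟪T lam u, f⟫ : ℂ)
          = (starRingEnd ℂ) (lam ^ 2) * ⟪u, f⟫ + (starRingEnd ℂ) lam * ⟪B u, f⟫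
            + ⟪L u, f⟫ := by
        simp only [hT_def]
        rw [inner_add_left, inner_add_left, inner_smul_left, inner_smul_left]
      rw [hskew u f] at h1
      rw [inner_add_right, inner_smul_right, inner_smul_right]
      rw [h1] at h0
      have : ((starRingEnd ℂ) lam) ^ 2 = (starRingEnd ℂ) (lam ^ 2) := (map_pow _ _ _).symm
      rw [this]
      linear_combination h0
    obtain ⟨hfD, hLfe⟩ := hSA f _ hLf
    have hTmuf : T mu f = 0 := by
      simp only [hT_def, hLfe, hmu_def]
      module
    have h1 := hlow2 f hfD
    rw [show mu ^ 2 • f + mu • B f + L f = T mu f from rfl, hTmuf, norm_zero] at h1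
    have h3 : ‖f‖ ≤ 0 := by
      by_contra h4
      push_neg at h4
      nlinarith
    exact norm_le_zero_iff.mp h3
  have hdense : Ra.topologicalClosure = ⊤ := by
    have h1 := Submodule.orthogonal_orthogonal_eq_closure Ra
    rw [← h1, horth, Submodule.bot_orthogonal_eq_top]
  -- closedness of the range
  have hclosed : ∀ f : H, f ∈ closure (Ra : Set H) → ∃ u, u ∈ D ∧ T lam u = f := by
    intro f hfcl
    obtain ⟨g, hgmem, hgt⟩ := mem_closure_iff_seq_limit.mp hfcl
    choose v hvD hvT using hgmem
    have hgc : CauchySeq g := hgt.cauchySeq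
    have hvc : CauchySeq v := by
      rw [Metric.cauchySeq_iff] at hgc ⊢
      intro ε hε
      obtain ⟨N, hN⟩ := hgc (δ₁ * ε) (by positivity)
      refine ⟨N, fun m hm k hk => ?_⟩
      have h1 := hlow1 (v m - v k) (hsubD _ (hvD m) _ (hvD k))
      have h2 : T lam (v m - v k) = g m - g k := by
        rw [hT_sub, hvT m, hvT k]
      rw [show lam ^ 2 • (v m - v k) + lam • B (v m - v k) + L (v m - v k)
        = T lam (v m - v k) from rfl, h2] at h1
      have h3 := hN m hm k hk
      rw [dist_eq_norm] at h3 ⊢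
      nlinarith [norm_nonneg (v m - v k)]
    obtain ⟨ulim, hul⟩ := cauchySeq_tendsto_of_complete hvc
    have hkey : ∀ w ∈ D, ⟪L w, ulim⟫ = ⟪w, f - lam ^ 2 • ulim - lam • B ulim⟫ := by
      intro w hw
      have t1 : Filter.Tendsto (fun n => (⟪L w, v n⟫ : ℂ)) Filter.atTop
          (nhds ⟪L w, ulim⟫) := Filter.Tendsto.inner tendsto_const_nhds hul
      have hLv : ∀ n, L (v n) = g n - lam ^ 2 • v n - lam • B (v n) := by
        intro n
        have := hvT n
        simp only [hT_def] at this
        rw [← this]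
        abel
      have t2 : Filter.Tendsto (fun n => L (v n)) Filter.atTop
          (nhds (f - lam ^ 2 • ulim - lam • B ulim)) := by
        simp only [hLv]
        exact (hgt.sub (hul.const_smul _)).sub
          (((B.continuous.tendsto ulim).comp hul).const_smul _)
      have t3 : Filter.Tendsto (fun n => (⟪w, L (v n)⟫ : ℂ)) Filter.atTop
          (nhds ⟪w, f - lam ^ 2 • ulim - lam • B ulim⟫) :=
        Filter.Tendsto.inner tendsto_const_nhds t2
      have heq : (fun n => (⟪L w, v n⟫ : ℂ)) = fun n => (⟪w, L (v n)⟫ : ℂ) := by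
        funext n
        exact hsym w hw (v n) (hvD n)
      rw [heq] at t1
      exact tendsto_nhds_unique t1 t3
    obtain ⟨hulD, hulL⟩ := hSA ulim _ hkey
    refine ⟨ulim, hulD, ?_⟩
    simp only [hT_def, hulL]
    abel
  have hsurj : ∀ f : H, ∃ u, u ∈ D ∧ T lam u = f := by
    intro f
    apply hclosed f
    have h1 : f ∈ Ra.topologicalClosure := by rw [hdense]; trivial
    rwa [← Submodule.topologicalClosure_coe]
  choose sol hsolD hsolT using hsurj
  have hsol_add : ∀ f g, sol (f + g) = sol f + sol g := by
    intro f g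
    refine hinj _ (hsolD _) _ (haddD _ (hsolD f) _ (hsolD g)) ?_
    rw [hsolT, hT_add, hsolT, hsolT]
  have hsol_smul : ∀ (a : ℂ) f, sol (a • f) = a • sol f := by
    intro a f
    refine hinj _ (hsolD _) _ (hsmulD a _ (hsolD f)) ?_
    rw [hsolT, hT_smul, hsolT]
  set Rl : H →ₗ[ℂ] H :=
    { toFun := sol
      map_add' := hsol_add
      map_smul' := hsol_smul } with hRl_def
  have hbound : ∀ f, ‖Rl f‖ ≤ δ₁⁻¹ * ‖f‖ := by
    intro f
    have h1 := hlow1 (sol f) (hsolD f)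
    rw [show lam ^ 2 • sol f + lam • B (sol f) + L (sol f) = T lam (sol f) from rfl,
      hsolT f] at h1
    have h2 : ‖Rl f‖ = ‖sol f‖ := rfl
    rw [h2, inv_mul_eq_div, le_div_iff₀ hδ₁pos]
    linarith
  refine ⟨LinearMap.mkContinuous Rl δ₁⁻¹ hbound, ?_, ?_⟩
  · intro f
    refine ⟨hsolD f, ?_⟩
    exact hsolT f
  · intro u hu
    exact hinj _ (hsolD _) _ hu (hsolT _)
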